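/- Let g : ℤ → ℝ satisfy g(t) ≥ 0 for all t, and let ε ≥ 0 satisfy |g(t+1) − g(t)| ≤ ε·g(t) for all t ∈ ℤ. Let w ≥ 1 be an integer with w·ε < 1, let n(t−w), …, n(t+w) be positive reals, and set n_w = Σ_{i=−w}^{w} n(t+i), μ_n = n_w/(2w+1), and σ_n = √(Σ_{i=−w}^{w} (n(t+i) − μ_n)²/(2w+1)). Suppose moreover that E ≥ 0 satisfies |(1/(2w+1))·Σ_{i=−w}^{w} g(t+i) − g(t)| ≤ E·g(t). Then |(1/n_w)·Σ_{i=−w}^{w} n(t+i)·g(t+i) − g(t)| ≤ (E + (σ_n/μ_n)·(w·ε/(1 − w·ε)))·g(t). -/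

import Mathlib

/-- Paper Lemma 8: the count-weighted moving average of a nonnegative sequence
with relatively bounded first differences deviates from the center value by at
most the relative factor `γ = E + (σ_n/μ_n)·(w·ε/(1 − w·ε))`, where `E` bounds
the relative deviation of the unweighted moving average. -/
theorem count_weighted_average_deviation (g : ℤ → ℝ) (hg : ∀ t, 0 ≤ g t)
    (ε : ℝ) (hε : 0 ≤ ε) (hdiff : ∀ t : ℤ, |g (t + 1) - g t| ≤ ε * g t)
    (w : ℕ) (hw : 1 ≤ w) (hwε : (w : ℝ) * ε < 1)
    (t : ℤ) (n : ℤ → ℝ) (hn : ∀ i ∈ Finset.Icc (-(w : ℤ)) (w : ℤ), 0 < n (t + i))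
    (nw μn σn : ℝ)
    (hnw : nw = ∑ i ∈ Finset.Icc (-(w : ℤ)) (w : ℤ), n (t + i))
    (hμn : μn = nw / (2 * w + 1))
    (hσn : σn = Real.sqrt
      ((∑ i ∈ Finset.Icc (-(w : ℤ)) (w : ℤ), (n (t + i) - μn) ^ 2) / (2 * w + 1)))
    (E : ℝ) (hE : 0 ≤ E)
    (hunweighted :
      |(1 / (2 * (w : ℝ) + 1)) * (∑ i ∈ Finset.Icc (-(w : ℤ)) (w : ℤ), g (t + i)) - g t|
        ≤ E * g t) :
    |(1 / nw) * (∑ i ∈ Finset.Icc (-(w : ℤ)) (w : ℤ), n (t + i) * g (t + i)) - g t|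
      ≤ (E + (σn / μn) * ((w : ℝ) * ε / (1 - (w : ℝ) * ε))) * g t := by
  set S : Finset ℤ := Finset.Icc (-(w : ℤ)) (w : ℤ) with hS
  have hw1 : (1 : ℝ) ≤ (w : ℝ) := by exact_mod_cast hw
  have hε1 : ε < 1 := by nlinarith
  have hδpos : (0:ℝ) < 1 - ε := by linarith
  have hδle : (1:ℝ) - ε ≤ 1 := by linarith
  have hc : (0:ℝ) ≤ (w : ℝ) * ε := by positivity
  have h1c : (0:ℝ) < 1 - (w : ℝ) * ε := by linarith
  have hgt : (0:ℝ) ≤ g t := hg t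
  -- adjacent one-step bounds
  have fa : ∀ u : ℤ, (1 - ε) * g u ≤ g (u + 1) := by
    intro u
    have h := abs_le.mp (hdiff u)
    linarith [h.1]
  have fc : ∀ u : ℤ, (1 - ε) * g (u + 1) ≤ g u := by
    intro u
    have h := abs_le.mp (hdiff u)
    nlinarith [mul_nonneg hδpos.le (by linarith [h.2] : (0:ℝ) ≤ g u + ε * g u - g (u + 1)),
      mul_nonneg (mul_nonneg hε hε) (hg u)]
  -- multiplicative bounds at distance |i|
  have key : ∀ i : ℤ, (1 - ε) ^ i.natAbs * g t ≤ g (t + i) ∧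
      g (t + i) * (1 - ε) ^ i.natAbs ≤ g t := by
    intro i
    induction i using Int.induction_on with
    | zero => simp
    | succ k ih =>
      have hna : ((k : ℤ) + 1).natAbs = (k : ℤ).natAbs + 1 := by omega
      constructor
      · rw [hna, pow_succ]
        calc (1 - ε) ^ (k:ℤ).natAbs * (1 - ε) * g t
            = (1 - ε) * ((1 - ε) ^ (k:ℤ).natAbs * g t) := by ring
          _ ≤ (1 - ε) * g (t + k) := by
              exact mul_le_mul_of_nonneg_left ih.1 hδpos.le
          _ ≤ g (t + k + 1) := fa (t + k)
          _ = g (t + ((k : ℤ) + 1)) := by ring_nf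
      · rw [hna, pow_succ]
        calc g (t + ((k:ℤ) + 1)) * ((1 - ε) ^ (k:ℤ).natAbs * (1 - ε))
            = ((1 - ε) * g (t + k + 1)) * (1 - ε) ^ (k:ℤ).natAbs := by ring_nf
          _ ≤ g (t + k) * (1 - ε) ^ (k:ℤ).natAbs := by
              exact mul_le_mul_of_nonneg_right (fc (t + k)) (by positivity)
          _ ≤ g t := ih.2
    | pred k ih =>
      have hna : (-(k : ℤ) - 1).natAbs = (-(k : ℤ)).natAbs + 1 := by omega
      have he : t + (-(k:ℤ) - 1) + 1 = t + -(k:ℤ) := by ring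
      constructor
      · rw [hna, pow_succ]
        calc (1 - ε) ^ (-(k:ℤ)).natAbs * (1 - ε) * g t
            = (1 - ε) * ((1 - ε) ^ (-(k:ℤ)).natAbs * g t) := by ring
          _ ≤ (1 - ε) * g (t + -(k:ℤ)) := mul_le_mul_of_nonneg_left ih.1 hδpos.le
          _ = (1 - ε) * g (t + (-(k:ℤ) - 1) + 1) := by rw [he]
          _ ≤ g (t + (-(k:ℤ) - 1)) := fc (t + (-(k:ℤ) - 1))
      · rw [hna, pow_succ]
        calc g (t + (-(k:ℤ) - 1)) * ((1 - ε) ^ (-(k:ℤ)).natAbs * (1 - ε))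
            = ((1 - ε) * g (t + (-(k:ℤ) - 1))) * (1 - ε) ^ (-(k:ℤ)).natAbs := by ring
          _ ≤ g (t + (-(k:ℤ) - 1) + 1) * (1 - ε) ^ (-(k:ℤ)).natAbs := by
              exact mul_le_mul_of_nonneg_right (fa (t + (-(k:ℤ) - 1))) (by positivity)
          _ = g (t + -(k:ℤ)) * (1 - ε) ^ (-(k:ℤ)).natAbs := by rw [he]
          _ ≤ g t := ih.2
  -- Bernoulli
  have hber : 1 - (w : ℝ) * ε ≤ (1 - ε) ^ w := by
    have h := one_add_mul_le_pow (a := -ε) (by linarith) w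
    have : (1 : ℝ) + (w : ℝ) * (-ε) = 1 - (w : ℝ) * ε := by ring
    rw [this] at h
    rwa [← sub_eq_add_neg] at h
  -- pointwise deviation bound on the window
  have bound : ∀ i ∈ S, |g (t + i) - g t| ≤ ((w : ℝ) * ε / (1 - (w : ℝ) * ε)) * g t := by
    intro i hi
    have hmem := Finset.mem_Icc.mp hi
    have hkw : i.natAbs ≤ w := by omega
    have hpow : (1 - ε) ^ w ≤ (1 - ε) ^ i.natAbs :=
      pow_le_pow_of_le_one hδpos.le hδle hkw
    have hL : (1 - (w : ℝ) * ε) * g t ≤ g (t + i) := by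
      calc (1 - (w : ℝ) * ε) * g t ≤ (1 - ε) ^ w * g t :=
            mul_le_mul_of_nonneg_right hber hgt
        _ ≤ (1 - ε) ^ i.natAbs * g t :=
            mul_le_mul_of_nonneg_right hpow hgt
        _ ≤ g (t + i) := (key i).1
    have hU : g (t + i) * (1 - (w : ℝ) * ε) ≤ g t := by
      calc g (t + i) * (1 - (w : ℝ) * ε) ≤ g (t + i) * (1 - ε) ^ w :=
            mul_le_mul_of_nonneg_left hber (hg _)
        _ ≤ g (t + i) * (1 - ε) ^ i.natAbs :=
            mul_le_mul_of_nonneg_left hpow (hg _)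
        _ ≤ g t := (key i).2
    have hdivle : (w : ℝ) * ε ≤ (w : ℝ) * ε / (1 - (w : ℝ) * ε) := by
      rw [le_div_iff₀ h1c]; nlinarith
    have hUb : g (t + i) ≤ g t / (1 - (w : ℝ) * ε) := (le_div_iff₀ h1c).mpr hU
    have hfe : g t / (1 - (w : ℝ) * ε)
        = g t + ((w : ℝ) * ε / (1 - (w : ℝ) * ε)) * g t := by
      field_simp
      ring
    rw [abs_le]
    constructor
    · have := mul_le_mul_of_nonneg_right hdivle hgt
      linarith
    · rw [hfe] at hUb
      linarith
  -- positivity facts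
  have hScard : S.card = 2 * w + 1 := by
    rw [hS, Int.card_Icc]
    omega
  have hcardR : ((S.card : ℕ) : ℝ) = 2 * (w : ℝ) + 1 := by
    rw [hScard]; push_cast; ring
  have hNpos : (0:ℝ) < 2 * (w : ℝ) + 1 := by positivity
  have hS0 : (0:ℤ) ∈ S := by
    rw [hS, Finset.mem_Icc]
    constructor <;> omega
  have hnwpos : 0 < nw := by
    rw [hnw]
    exact Finset.sum_pos hn ⟨0, hS0⟩
  have hμpos : 0 < μn := by rw [hμn]; positivity
  have hσnn : 0 ≤ σn := by rw [hσn]; exact Real.sqrt_nonneg _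
  -- sum of deviations vanishes
  have hsum_dev : ∑ i ∈ S, (n (t + i) - μn) = 0 := by
    rw [Finset.sum_sub_distrib, Finset.sum_const, ← hnw, hScard, hμn]
    rw [nsmul_eq_mul]
    push_cast
    field_simp
    ring
  -- decomposition
  have hsplit : ∑ i ∈ S, (n (t + i) - μn) * (g (t + i) - g t)
      = (∑ i ∈ S, n (t + i) * g (t + i)) - μn * (∑ i ∈ S, g (t + i)) := by
    calc ∑ i ∈ S, (n (t + i) - μn) * (g (t + i) - g t)
        = ∑ i ∈ S, (n (t + i) * g (t + i) - μn * g (t + i) - (n (t + i) - μn) * g t) := by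
          apply Finset.sum_congr rfl; intros; ring
      _ = (∑ i ∈ S, n (t + i) * g (t + i)) - μn * (∑ i ∈ S, g (t + i))
            - (∑ i ∈ S, (n (t + i) - μn)) * g t := by
          rw [Finset.sum_sub_distrib, Finset.sum_sub_distrib, Finset.mul_sum, Finset.sum_mul]
      _ = (∑ i ∈ S, n (t + i) * g (t + i)) - μn * (∑ i ∈ S, g (t + i)) := by
          rw [hsum_dev]; ring
  have hμdiv : μn * (1 / nw) = 1 / (2 * (w : ℝ) + 1) := by
    rw [hμn]
    field_simp
  have hid : (1 / nw) * (∑ i ∈ S, n (t + i) * g (t + i)) - g t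
      = ((1 / (2 * (w : ℝ) + 1)) * (∑ i ∈ S, g (t + i)) - g t)
        + (1 / nw) * (∑ i ∈ S, (n (t + i) - μn) * (g (t + i) - g t)) := by
    rw [hsplit, mul_sub]
    have : 1 / nw * (μn * (∑ i ∈ S, g (t + i)))
        = (1 / (2 * (w : ℝ) + 1)) * (∑ i ∈ S, g (t + i)) := by
      rw [← hμdiv]; ring
    linarith [this]
  -- bound the cross term
  have habs_sum : |∑ i ∈ S, (n (t + i) - μn) * (g (t + i) - g t)|
      ≤ (∑ i ∈ S, |n (t + i) - μn|) * (((w : ℝ) * ε / (1 - (w : ℝ) * ε)) * g t) := by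
    calc |∑ i ∈ S, (n (t + i) - μn) * (g (t + i) - g t)|
        ≤ ∑ i ∈ S, |(n (t + i) - μn) * (g (t + i) - g t)| :=
          Finset.abs_sum_le_sum_abs _ _
      _ ≤ ∑ i ∈ S, |n (t + i) - μn| * (((w : ℝ) * ε / (1 - (w : ℝ) * ε)) * g t) := by
          apply Finset.sum_le_sum
          intro i hi
          rw [abs_mul]
          exact mul_le_mul_of_nonneg_left (bound i hi) (abs_nonneg _)
      _ = (∑ i ∈ S, |n (t + i) - μn|) * (((w : ℝ) * ε / (1 - (w : ℝ) * ε)) * g t) := by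
          rw [← Finset.sum_mul]
  -- Cauchy–Schwarz: sum of |deviations| ≤ (2w+1)·σn
  have hSqnn : 0 ≤ ∑ i ∈ S, (n (t + i) - μn) ^ 2 :=
    Finset.sum_nonneg fun _ _ => sq_nonneg _
  have hσ_sq : σn ^ 2 = (∑ i ∈ S, (n (t + i) - μn) ^ 2) / (2 * (w : ℝ) + 1) := by
    rw [hσn]
    exact Real.sq_sqrt (by positivity)
  have hsum_abs : ∑ i ∈ S, |n (t + i) - μn| ≤ (2 * (w : ℝ) + 1) * σn := by
    have hCS : (∑ i ∈ S, |n (t + i) - μn|) ^ 2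
        ≤ (S.card : ℝ) * ∑ i ∈ S, |n (t + i) - μn| ^ 2 := by
      exact_mod_cast sq_sum_le_card_mul_sum_sq (s := S) (f := fun i => |n (t + i) - μn|)
    have hsq : ∀ i ∈ S, |n (t + i) - μn| ^ 2 = (n (t + i) - μn) ^ 2 := by
      intro i _; rw [sq_abs]
    rw [Finset.sum_congr rfl hsq, hcardR] at hCS
    have hrhs : (2 * (w : ℝ) + 1) * ∑ i ∈ S, (n (t + i) - μn) ^ 2
        = ((2 * (w : ℝ) + 1) * σn) ^ 2 := by
      rw [mul_pow, hσ_sq]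
      field_simp
    rw [hrhs] at hCS
    have h1 : 0 ≤ ∑ i ∈ S, |n (t + i) - μn| :=
      Finset.sum_nonneg fun _ _ => abs_nonneg _
    have h2 : 0 ≤ (2 * (w : ℝ) + 1) * σn := by positivity
    calc ∑ i ∈ S, |n (t + i) - μn|
        = Real.sqrt ((∑ i ∈ S, |n (t + i) - μn|) ^ 2) := (Real.sqrt_sq h1).symm
      _ ≤ Real.sqrt (((2 * (w : ℝ) + 1) * σn) ^ 2) := Real.sqrt_le_sqrt hCS
      _ = (2 * (w : ℝ) + 1) * σn := Real.sqrt_sq h2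
  -- final combination
  have hfactor : (0:ℝ) ≤ ((w : ℝ) * ε / (1 - (w : ℝ) * ε)) * g t := by positivity
  have hcross : (1 / nw) * |∑ i ∈ S, (n (t + i) - μn) * (g (t + i) - g t)|
      ≤ (σn / μn) * ((w : ℝ) * ε / (1 - (w : ℝ) * ε)) * g t := by
    have step1 : (1 / nw) * |∑ i ∈ S, (n (t + i) - μn) * (g (t + i) - g t)|
        ≤ (1 / nw) * ((2 * (w : ℝ) + 1) * σn * (((w : ℝ) * ε / (1 - (w : ℝ) * ε)) * g t)) := by
      apply mul_le_mul_of_nonneg_left _ (by positivity)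
      calc |∑ i ∈ S, (n (t + i) - μn) * (g (t + i) - g t)|
          ≤ (∑ i ∈ S, |n (t + i) - μn|) * (((w : ℝ) * ε / (1 - (w : ℝ) * ε)) * g t) :=
            habs_sum
        _ ≤ (2 * (w : ℝ) + 1) * σn * (((w : ℝ) * ε / (1 - (w : ℝ) * ε)) * g t) :=
            mul_le_mul_of_nonneg_right hsum_abs hfactor
    have step2 : (1 / nw) * ((2 * (w : ℝ) + 1) * σn * (((w : ℝ) * ε / (1 - (w : ℝ) * ε)) * g t))
        = (σn / μn) * ((w : ℝ) * ε / (1 - (w : ℝ) * ε)) * g t := by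
      rw [hμn]
      field_simp
    linarith [step1, step2 ▸ step1]
  calc |(1 / nw) * (∑ i ∈ S, n (t + i) * g (t + i)) - g t|
      = |((1 / (2 * (w : ℝ) + 1)) * (∑ i ∈ S, g (t + i)) - g t)
          + (1 / nw) * (∑ i ∈ S, (n (t + i) - μn) * (g (t + i) - g t))| := by rw [hid]
    _ ≤ |(1 / (2 * (w : ℝ) + 1)) * (∑ i ∈ S, g (t + i)) - g t|
          + |(1 / nw) * (∑ i ∈ S, (n (t + i) - μn) * (g (t + i) - g t))| := abs_add_le _ _
    _ ≤ E * g t + (σn / μn) * ((w : ℝ) * ε / (1 - (w : ℝ) * ε)) * g t := by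
        have h2 : |(1 / nw) * (∑ i ∈ S, (n (t + i) - μn) * (g (t + i) - g t))|
            = (1 / nw) * |∑ i ∈ S, (n (t + i) - μn) * (g (t + i) - g t)| := by
          rw [abs_mul, abs_of_pos (by positivity : (0:ℝ) < 1 / nw)]
        rw [h2]
        exact add_le_add hunweighted hcross
    _ = (E + (σn / μn) * ((w : ℝ) * ε / (1 - (w : ℝ) * ε))) * g t := by ring
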